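/- Let ψ(x) := √x · arcsin(1/√x) + √(x-1) for x ≥ 1. Then there exists a constant C > 0 such that for all x ∈ (1,∞): |ψ'(x)| ≤ C x^{-1/2} and |ψ''(x)| ≤ C x^{-1}(x-1)^{-1/2}. -/

import Mathlib

noncomputable section

namespace Stmt17

def F (x : ℝ) : ℝ := Real.sqrt x * Real.arcsin (1 / Real.sqrt x) + Real.sqrt (x - 1)

def F1 (x : ℝ) : ℝ :=
  Real.arcsin (1 / Real.sqrt x) / (2 * Real.sqrt x)
    + (1 - 1 / Real.sqrt x) / (2 * Real.sqrt (x - 1))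

def F2 (x : ℝ) : ℝ :=
  -(Real.arcsin (1 / Real.sqrt x) / (4 * x * Real.sqrt x))
    - (1 - 1 / Real.sqrt x) / (4 * (x - 1) * Real.sqrt (x - 1))

lemma one_lt_sqrt {x : ℝ} (hx : 1 < x) : 1 < Real.sqrt x := by
  rw [← Real.sqrt_one]; exact Real.sqrt_lt_sqrt zero_le_one hx

lemma sqrt_one_sub {x : ℝ} (hx : 1 < x) :
    Real.sqrt (1 - (1 / Real.sqrt x) ^ 2) = Real.sqrt (x - 1) / Real.sqrt x := by
  have hx0 : 0 < x := lt_trans one_pos hx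
  have h1 : (1 / Real.sqrt x) ^ 2 = 1 / x := by
    rw [div_pow, one_pow, Real.sq_sqrt hx0.le]
  rw [h1, show 1 - 1 / x = (x - 1) / x by field_simp, Real.sqrt_div (by linarith) x]

lemma hasDerivAt_inner {x : ℝ} (hx : 1 < x) :
    HasDerivAt (fun y => 1 / Real.sqrt y) (-(1 / (2 * Real.sqrt x)) / x) x := by
  have hx0 : 0 < x := lt_trans one_pos hx
  have h := (Real.hasDerivAt_sqrt hx0.ne').inv (Real.sqrt_ne_zero'.mpr hx0)
  simp only [one_div]
  refine h.congr_deriv ?_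
  symm
  rw [Real.sq_sqrt hx0.le]
  ring

lemma hasDerivAt_arcsin_comp {x : ℝ} (hx : 1 < x) :
    HasDerivAt (fun y => Real.arcsin (1 / Real.sqrt y))
      (-(1 / (2 * x * Real.sqrt (x - 1)))) x := by
  have hx0 : 0 < x := lt_trans one_pos hx
  have ha : 1 < Real.sqrt x := one_lt_sqrt hx
  have hb : 0 < Real.sqrt (x - 1) := Real.sqrt_pos.mpr (by linarith)
  have h1 : 1 / Real.sqrt x ≠ -1 := by
    have hpos : (0:ℝ) < 1 / Real.sqrt x := by positivity
    exact ne_of_gt (by linarith)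
  have h2 : 1 / Real.sqrt x ≠ 1 := by
    have : 1 / Real.sqrt x < 1 := by
      rw [div_lt_one (by linarith)]; exact ha
    exact this.ne
  have h := (Real.hasDerivAt_arcsin h1 h2).comp x (hasDerivAt_inner hx)
  refine h.congr_deriv ?_
  symm
  rw [sqrt_one_sub hx]
  field_simp

lemma hasDerivAt_sqrt_sub {x : ℝ} (hx : 1 < x) :
    HasDerivAt (fun y : ℝ => Real.sqrt (y - 1)) (1 / (2 * Real.sqrt (x - 1))) x := by
  have hx1 : (0:ℝ) < x - 1 := by linarith
  have := (Real.hasDerivAt_sqrt hx1.ne').comp x ((hasDerivAt_id x).sub_const 1)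
  exact this.congr_deriv (mul_one _)

lemma hasDerivAt_F {x : ℝ} (hx : 1 < x) : HasDerivAt F (F1 x) x := by
  have hx0 : 0 < x := lt_trans one_pos hx
  have hx1 : (0:ℝ) < x - 1 := by linarith
  have ha : 1 < Real.sqrt x := one_lt_sqrt hx
  have hb : 0 < Real.sqrt (x - 1) := Real.sqrt_pos.mpr hx1
  have h := ((Real.hasDerivAt_sqrt hx0.ne').mul (hasDerivAt_arcsin_comp hx)).add
    (hasDerivAt_sqrt_sub hx)
  refine h.congr_deriv ?_
  symm
  unfold F1
  have hax : Real.sqrt x ^ 2 = x := Real.sq_sqrt hx0.le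
  have hbx : Real.sqrt (x - 1) ^ 2 = x - 1 := Real.sq_sqrt hx1.le
  set a := Real.sqrt x
  set b := Real.sqrt (x - 1)
  rw [← hax]
  field_simp
  ring

lemma hasDerivAt_F1 {x : ℝ} (hx : 1 < x) : HasDerivAt F1 (F2 x) x := by
  have hx0 : 0 < x := lt_trans one_pos hx
  have hx1 : (0:ℝ) < x - 1 := by linarith
  have ha : 1 < Real.sqrt x := one_lt_sqrt hx
  have hb : 0 < Real.sqrt (x - 1) := Real.sqrt_pos.mpr hx1
  have t1 := (hasDerivAt_arcsin_comp hx).div ((Real.hasDerivAt_sqrt hx0.ne').const_mul 2)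
    (by positivity)
  have t2 := ((hasDerivAt_inner hx).const_sub 1).div ((hasDerivAt_sqrt_sub hx).const_mul 2)
    (by positivity)
  have h := t1.add t2
  refine h.congr_deriv ?_
  symm
  unfold F2
  have hax : Real.sqrt x ^ 2 = x := Real.sq_sqrt hx0.le
  have hbx : Real.sqrt (x - 1) ^ 2 = x - 1 := Real.sq_sqrt hx1.le
  set a := Real.sqrt x
  set b := Real.sqrt (x - 1)
  rw [← hbx, ← hax]
  field_simp
  ring

lemma rpow_neg_half {t : ℝ} (ht : 0 < t) : t ^ (-(1:ℝ) / 2) = (Real.sqrt t)⁻¹ := by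
  rw [show (-(1:ℝ) / 2) = -(1 / 2) by ring, Real.rpow_neg ht.le, ← Real.sqrt_eq_rpow]

lemma bound1 {x : ℝ} (hx : 1 < x) : |F1 x| ≤ 2 * x ^ (-(1:ℝ) / 2) := by
  have hx0 : 0 < x := lt_trans one_pos hx
  have hx1 : (0:ℝ) < x - 1 := by linarith
  have ha : 1 < Real.sqrt x := one_lt_sqrt hx
  have hb : 0 < Real.sqrt (x - 1) := Real.sqrt_pos.mpr hx1
  have hax : Real.sqrt x ^ 2 = x := Real.sq_sqrt hx0.le
  have hbx : Real.sqrt (x - 1) ^ 2 = x - 1 := Real.sq_sqrt hx1.le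
  rw [rpow_neg_half hx0]
  unfold F1
  set a := Real.sqrt x
  set b := Real.sqrt (x - 1)
  have hA0 : 0 ≤ Real.arcsin (1 / a) := Real.arcsin_nonneg.mpr (by positivity)
  have hA2 : Real.arcsin (1 / a) ≤ 2 := by
    have := Real.arcsin_le_pi_div_two (1 / a)
    nlinarith [Real.pi_le_four]
  have hab : a - 1 ≤ b := by nlinarith
  have ha1 : 0 < 1 - 1 / a := by
    have : 1 / a < 1 := by rw [div_lt_one (by linarith)]; exact ha
    linarith
  rw [abs_of_nonneg (by positivity)]
  have h1 : Real.arcsin (1 / a) / (2 * a) ≤ 1 / a := by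
    rw [div_le_div_iff₀ (by positivity) (by positivity)]
    nlinarith
  have h2 : (1 - 1 / a) / (2 * b) ≤ 1 / a := by
    rw [div_le_div_iff₀ (by positivity) (by positivity)]
    have hia : (1 / a) * a = 1 := by field_simp
    nlinarith
  have : (1:ℝ) / a + 1 / a = 2 * a⁻¹ := by ring
  linarith

lemma bound2 {x : ℝ} (hx : 1 < x) :
    |F2 x| ≤ 2 * x⁻¹ * (x - 1) ^ (-(1:ℝ) / 2) := by
  have hx0 : 0 < x := lt_trans one_pos hx
  have hx1 : (0:ℝ) < x - 1 := by linarith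
  have ha : 1 < Real.sqrt x := one_lt_sqrt hx
  have hb : 0 < Real.sqrt (x - 1) := Real.sqrt_pos.mpr hx1
  have hax : Real.sqrt x ^ 2 = x := Real.sq_sqrt hx0.le
  have hbx : Real.sqrt (x - 1) ^ 2 = x - 1 := Real.sq_sqrt hx1.le
  rw [rpow_neg_half hx1]
  unfold F2
  set a := Real.sqrt x
  set b := Real.sqrt (x - 1)
  have hA0 : 0 ≤ Real.arcsin (1 / a) := Real.arcsin_nonneg.mpr (by positivity)
  have hA2 : Real.arcsin (1 / a) ≤ 2 := by
    have := Real.arcsin_le_pi_div_two (1 / a)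
    nlinarith [Real.pi_le_four]
  have hab : b ≤ a := by nlinarith
  have ha1 : 0 < 1 - 1 / a := by
    have : 1 / a < 1 := by rw [div_lt_one (by linarith)]; exact ha
    linarith
  have habs : |(-(Real.arcsin (1 / a) / (4 * x * a)) - (1 - 1 / a) / (4 * (x - 1) * b))|
      = Real.arcsin (1 / a) / (4 * x * a) + (1 - 1 / a) / (4 * (x - 1) * b) := by
    have hnn : 0 ≤ Real.arcsin (1 / a) / (4 * x * a) + (1 - 1 / a) / (4 * (x - 1) * b) :=
      add_nonneg (by positivity) (div_nonneg ha1.le (by positivity))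
    rw [show (-(Real.arcsin (1 / a) / (4 * x * a)) - (1 - 1 / a) / (4 * (x - 1) * b))
        = -((Real.arcsin (1 / a) / (4 * x * a)) + (1 - 1 / a) / (4 * (x - 1) * b)) by ring,
      abs_neg, abs_of_nonneg hnn]
  rw [habs]
  have h1 : Real.arcsin (1 / a) / (4 * x * a) ≤ 1 / (2 * x * b) := by
    rw [div_le_div_iff₀ (by positivity) (by positivity)]
    nlinarith [mul_pos hx0 hb]
  have h2 : (1 - 1 / a) / (4 * (x - 1) * b) ≤ 1 / (4 * x * b) := by
    rw [div_le_div_iff₀ (by positivity) (by positivity)]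
    have hia : (1 / a) * (a * a) = a := by field_simp
    nlinarith [mul_pos hx0 hb, mul_pos ha1 hb]
  have h3 : 1 / (2 * x * b) + 1 / (4 * x * b) ≤ 2 * x⁻¹ * b⁻¹ := by
    rw [show (2:ℝ) * x⁻¹ * b⁻¹ = 2 / (x * b) by ring]
    rw [div_add_div _ _ (by positivity) (by positivity), div_le_div_iff₀ (by positivity) (by positivity)]
    nlinarith [mul_pos hx0 hb]
  linarith

end Stmt17

/-- Verification of condition (H.1) for Swanson's process: for
`ψ(x) = √x · arcsin(1/√x) + √(x-1)`, one has `|ψ'(x)| ≤ C x^{-1/2}` and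
`|ψ''(x)| ≤ C x⁻¹ (x-1)^{-1/2}` for all `x ∈ (1,∞)`. -/
theorem stmt_17 (ψ : ℝ → ℝ)
    (hψ : ∀ x : ℝ, 1 ≤ x →
      ψ x = Real.sqrt x * Real.arcsin (1 / Real.sqrt x) + Real.sqrt (x - 1)) :
    ∃ C : ℝ, 0 < C ∧ ∀ x : ℝ, 1 < x →
      |deriv ψ x| ≤ C * x ^ (-(1 : ℝ) / 2) ∧
      |deriv (deriv ψ) x| ≤ C * x⁻¹ * (x - 1) ^ (-(1 : ℝ) / 2) := by
  refine ⟨2, by norm_num, fun x hx => ?_⟩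
  have hd1 : ∀ y : ℝ, 1 < y → deriv ψ y = Stmt17.F1 y := by
    intro y hy
    have hevy : ψ =ᶠ[nhds y] Stmt17.F :=
      Filter.eventuallyEq_of_mem (Ioi_mem_nhds hy) (fun z hz => hψ z (le_of_lt hz))
    rw [hevy.deriv_eq, (Stmt17.hasDerivAt_F hy).deriv]
  have hd2 : deriv (deriv ψ) x = Stmt17.F2 x := by
    have hev2 : deriv ψ =ᶠ[nhds x] Stmt17.F1 :=
      Filter.eventuallyEq_of_mem (Ioi_mem_nhds hx) (fun y hy => hd1 y hy)
    rw [hev2.deriv_eq, (Stmt17.hasDerivAt_F1 hx).deriv]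
  rw [hd1 x hx, hd2]
  exact ⟨Stmt17.bound1 hx, Stmt17.bound2 hx⟩
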